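/- For all real x, exp(x - x²/2) ≤ 1 + x + x²/3. -/

import Mathlib

private noncomputable def delyonF : ℝ → ℝ :=
  fun x => Real.log (1 + x + x ^ 2 / 3) - x + x ^ 2 / 2

private lemma delyonP_pos (y : ℝ) : 0 < 1 + y + y ^ 2 / 3 := by
  nlinarith [sq_nonneg (2 * y + 3)]

private lemma delyonF_hasDeriv (y : ℝ) :
    HasDerivAt delyonF (y * ((y + 1) ^ 2 + 1) / (3 * (1 + y + y ^ 2 / 3))) y := by
  have hp := delyonP_pos y
  have h1 : HasDerivAt (fun x : ℝ => 1 + x + x ^ 2 / 3) (1 + 2 * y / 3) y := by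
    have := ((hasDerivAt_const y (1 : ℝ)).add (hasDerivAt_id y)).add
      ((hasDerivAt_pow 2 y).div_const 3)
    refine this.congr_deriv ?_
    ring
  have hlog := h1.log hp.ne'
  have h2 := (hlog.sub (hasDerivAt_id y)).add ((hasDerivAt_pow 2 y).div_const 2)
  refine h2.congr_deriv (Eq.symm ?_)
  have hq : (1 + y + y ^ 2 / 3) ≠ 0 := hp.ne'
  norm_num
  rw [div_eq_iff (by positivity : (3:ℝ) * (1 + y + y ^ 2 / 3) ≠ 0), sub_add,
    div_sub' hq, div_mul_eq_mul_div, eq_div_iff hq]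
  ring

private lemma delyonF_nonneg (x : ℝ) : 0 ≤ delyonF x := by
  have hdiff : Differentiable ℝ delyonF := fun y => (delyonF_hasDeriv y).differentiableAt
  have hF0 : delyonF 0 = 0 := by simp [delyonF]
  rcases le_or_gt 0 x with hx | hx
  · have mono : MonotoneOn delyonF (Set.Ici 0) := by
      apply monotoneOn_of_deriv_nonneg (convex_Ici 0) hdiff.continuous.continuousOn
        (fun y _ => (hdiff y).differentiableWithinAt)
      intro y hy
      rw [interior_Ici] at hy
      rw [(delyonF_hasDeriv y).deriv]
      have hp := delyonP_pos y
      have hy' : (0:ℝ) < y := hy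
      apply div_nonneg
      · nlinarith [sq_nonneg (y + 1)]
      · linarith
    have := mono (Set.self_mem_Ici) hx hx
    rwa [hF0] at this
  · have anti : AntitoneOn delyonF (Set.Iic 0) := by
      apply antitoneOn_of_deriv_nonpos (convex_Iic 0) hdiff.continuous.continuousOn
        (fun y _ => (hdiff y).differentiableWithinAt)
      intro y hy
      rw [interior_Iic] at hy
      rw [(delyonF_hasDeriv y).deriv]
      have hp := delyonP_pos y
      have hy' : y < 0 := hy
      apply div_nonpos_of_nonpos_of_nonneg
      · nlinarith [sq_nonneg (y + 1)]
      · linarith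
    have := anti hx.le (Set.self_mem_Iic) hx.le
    rwa [hF0] at this

theorem delyon_inequality (x : ℝ) :
    Real.exp (x - x ^ 2 / 2) ≤ 1 + x + x ^ 2 / 3 := by
  have hp := delyonP_pos x
  have h := delyonF_nonneg x
  have key : x - x ^ 2 / 2 ≤ Real.log (1 + x + x ^ 2 / 3) := by
    simp only [delyonF] at h; linarith
  calc Real.exp (x - x ^ 2 / 2) ≤ Real.exp (Real.log (1 + x + x ^ 2 / 3)) :=
        Real.exp_le_exp.mpr key
    _ = 1 + x + x ^ 2 / 3 := Real.exp_log hp
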